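/- Let q be an odd prime power, ℓ = ord_2(q−1), and α ∈ F_q a primitive 2^ℓ-th root of unity. Then the equation x^q = αx has exactly q − 1 nonzero solutions in F_{q^{2^ℓ}}, and none of these solutions lie in any proper subfield F_{q^{2^d}} with d < ℓ. -/

import Mathlib

/-- Let `q` be an odd prime power, `ℓ = ord₂(q−1)`, and `α` a primitive
`2^ℓ`-th root of unity lying in the prime subfield `F_q` of `K = F_{q^{2^ℓ}}`
(i.e. `α^q = α` and `α` has multiplicative order `2^ℓ`).  Then the equation
`x^q = α·x` has exactly `q − 1` nonzero solutions in `K`, and none of them lies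
in a proper subfield `F_{q^{2^d}}` with `d < ℓ` (i.e. none is fixed by
`Frob^{2^d}`). -/
theorem stmt_13 (q ℓ : ℕ) (hq : Odd q) (hq1 : 1 < q)
    (hqpp : ∃ p k : ℕ, p.Prime ∧ 0 < k ∧ q = p ^ k)
    (hℓ : padicValNat 2 (q - 1) = ℓ)
    (K : Type*) [Field K] [Fintype K] [DecidableEq K]
    (hcard : Fintype.card K = q ^ 2 ^ ℓ)
    (α : K) (hαq : α ^ q = α) (hord : orderOf α = 2 ^ ℓ) :
    (Finset.univ.filter fun x : K => x ≠ 0 ∧ x ^ q = α * x).card = q - 1 ∧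
      ∀ x : K, x ≠ 0 → x ^ q = α * x → ∀ d < ℓ, x ^ q ^ 2 ^ d ≠ x := by
  classical
  have hq0 : 0 < q := by omega
  set n : ℕ := 2 ^ ℓ with hn
  have hn0 : 0 < n := Nat.pow_pos (by norm_num)
  have hαpow : α ^ n = 1 := by rw [← hord]; exact pow_orderOf_eq_one α
  have hα0 : α ≠ 0 := by
    intro h
    rw [h, zero_pow hn0.ne'] at hαpow
    exact zero_ne_one hαpow
  -- Part 2
  have part2 : ∀ x : K, x ≠ 0 → x ^ q = α * x → ∀ d < ℓ, x ^ q ^ 2 ^ d ≠ x := by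
    intro x hx hxq d hd
    have key : ∀ k, x ^ q ^ k = α ^ k * x := by
      intro k
      induction k with
      | zero => simp
      | succ k ih =>
        rw [pow_succ, pow_mul, ih, mul_pow, hxq, ← pow_mul, mul_comm k q, pow_mul,
          hαq, ← mul_assoc, ← pow_succ]
    rw [key (2 ^ d)]
    intro h
    have h1 : α ^ 2 ^ d = 1 := by
      have := mul_right_cancel₀ hx (h.trans (one_mul x).symm)
      exact this
    have h2 : n ∣ 2 ^ d := hord ▸ orderOf_dvd_of_pow_eq_one h1
    rw [hn] at h2
    have h3 : (2:ℕ) ^ ℓ ≤ 2 ^ d := Nat.le_of_dvd (Nat.pow_pos (by norm_num)) h2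
    have := (Nat.pow_le_pow_iff_right (by norm_num : 1 < 2)).mp h3
    omega
  refine ⟨?_, part2⟩
  -- Part 1 : counting
  set M : ℕ := ∑ i ∈ Finset.range n, q ^ i with hMdef
  have hM : (M : ℤ) = ∑ i ∈ Finset.range n, (q : ℤ) ^ i := by push_cast [hMdef]; rfl
  have hpow1 : 1 ≤ q ^ n := Nat.one_le_pow _ _ hq0
  have hNM : q ^ n - 1 = (q - 1) * M := by
    have h3 : (M : ℤ) * ((q : ℤ) - 1) = (q : ℤ) ^ n - 1 := by
      rw [hM]; exact geom_sum_mul _ _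
    have : ((q ^ n - 1 : ℕ) : ℤ) = (((q - 1) * M : ℕ) : ℤ) := by
      push_cast [Nat.cast_sub hpow1, Nat.cast_sub hq1.le]
      linarith
    exact_mod_cast this
  have hpowlt : 1 < q ^ n := Nat.one_lt_pow hn0.ne' hq1
  have hM0 : 0 < M := by
    rcases Nat.eq_zero_or_pos M with h | h
    · rw [h, mul_zero] at hNM; omega
    · exact h
  -- α ^ M = 1
  have hfrob : ∀ i, α ^ q ^ i = α := by
    intro i
    induction i with
    | zero => simp
    | succ i ih => rw [pow_succ, pow_mul, ih, hαq]
  have hαM : α ^ M = 1 := by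
    rw [hMdef, ← Finset.prod_pow_eq_pow_sum]
    calc (∏ i ∈ Finset.range n, α ^ q ^ i) = ∏ i ∈ Finset.range n, α := by
          exact Finset.prod_congr rfl fun i _ => hfrob i
      _ = α ^ n := by rw [Finset.prod_const, Finset.card_range]
      _ = 1 := hαpow
  -- cyclic group of units
  obtain ⟨g, hg⟩ := IsCyclic.exists_generator (α := Kˣ)
  have hcardU : Fintype.card Kˣ = q ^ n - 1 := by
    rw [Fintype.card_units, hcard]
  have hordg : orderOf g = q ^ n - 1 := by
    rw [orderOf_eq_card_of_forall_mem_zpowers hg, Nat.card_eq_fintype_card, hcardU]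
  set αu : Kˣ := Units.mk0 α hα0 with hαu
  obtain ⟨m, hm⟩ := mem_powers_iff_mem_zpowers.mpr (hg αu)
  have hm : g ^ m = αu := hm
  have hαuM : αu ^ M = 1 := by
    ext
    push_cast [hαu]
    exact hαM
  have hdvd1 : orderOf g ∣ m * M := by
    apply orderOf_dvd_of_pow_eq_one
    rw [pow_mul, hm, hαuM]
  have hdvd2 : (q - 1) ∣ m := by
    rw [hordg, hNM] at hdvd1
    exact (Nat.mul_dvd_mul_iff_right hM0).mp hdvd1
  set b : Kˣ := g ^ (m / (q - 1)) with hbdef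
  have hb : b ^ (q - 1) = αu := by
    rw [hbdef, ← pow_mul, Nat.div_mul_cancel hdvd2, hm]
  have hbK : (b : K) ^ (q - 1) = α := by
    have := congrArg (Units.val) hb
    push_cast at this
    exact this
  have hb0 : (b : K) ≠ 0 := Units.ne_zero b
  -- primitive (q-1)-th root of unity
  set ζu : Kˣ := g ^ M with hζdef
  have hordζ : orderOf ζu = q - 1 := by
    rw [hζdef, orderOf_pow, hordg, hNM, Nat.gcd_eq_right ⟨q - 1, (mul_comm _ _)⟩,
      Nat.mul_div_cancel _ hM0]
  have hζ : IsPrimitiveRoot ((ζu : K)) (q - 1) := by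
    have h1 : orderOf ((ζu : K)) = q - 1 := by rw [orderOf_units, hordζ]
    have h2 := IsPrimitiveRoot.orderOf ((ζu : K))
    rwa [h1] at h2
  have hq1' : 0 < q - 1 := by omega
  have key : Finset.univ.filter (fun x : K => x ≠ 0 ∧ x ^ q = α * x)
      = (Polynomial.nthRootsFinset (q - 1) (1 : K)).image (fun y => (b : K) * y) := by
    ext x
    simp only [Finset.mem_filter, Finset.mem_univ, true_and, Finset.mem_image,
      Polynomial.mem_nthRootsFinset hq1']
    constructor
    · rintro ⟨hx0, hxq⟩
      refine ⟨(b : K)⁻¹ * x, ?_, by rw [← mul_assoc, mul_inv_cancel₀ hb0, one_mul]⟩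
      have hxq1 : x ^ (q - 1) = α := by
        have h : x ^ (q - 1) * x = α * x := by
          rw [← pow_succ, Nat.sub_add_cancel hq0]; exact hxq
        exact mul_right_cancel₀ hx0 h
      rw [mul_pow, inv_pow, hbK, hxq1, inv_mul_cancel₀ hα0]
    · rintro ⟨y, hy, rfl⟩
      have hy0 : y ≠ 0 := by
        intro h; rw [h, zero_pow hq1'.ne'] at hy; exact zero_ne_one hy
      refine ⟨mul_ne_zero hb0 hy0, ?_⟩
      have h1 : ((b : K) * y) ^ (q - 1) = α := by rw [mul_pow, hbK, hy, mul_one]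
      calc ((b : K) * y) ^ q = ((b : K) * y) ^ (q - 1) * ((b : K) * y) := by
            rw [← pow_succ, Nat.sub_add_cancel hq0]
        _ = α * ((b : K) * y) := by rw [h1]
  rw [key, Finset.card_image_of_injective _ (mul_right_injective₀ hb0),
    hζ.card_nthRootsFinset]
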